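/- There exist constants C > 0 and M ∈ ℕ such that for every λ ∈ K and every μ = Σ_{i=1}^r c_i α_i with c_i ∈ ℕ₀ and n := Σ_{i=1}^r c_i ≥ M, one has |½(μ,μ) − (ρ,μ) − λ(μ)| ≥ C·n². -/

import Mathlib

/-- Let `E` be a finite-dimensional real inner product space,
`α_1,…,α_r ∈ E`, `ρ ∈ E` with `(ρ, α_i) > 0` for all `i`, and `K` a compact set of
`ℝ`-linear maps `E → ℂ` (continuous linear maps, with the operator norm topology).
Then there are constants `C > 0` and `M ∈ ℕ` such that for every `λ ∈ K` and every
`μ = Σ c_i α_i` with `c_i ∈ ℕ₀` and `n := Σ c_i ≥ M`, one has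
`|½(μ,μ) − (ρ,μ) − λ(μ)| ≥ C·n²`. -/
theorem stmt6 {E : Type} [NormedAddCommGroup E] [InnerProductSpace ℝ E]
    [FiniteDimensional ℝ E]
    {r : ℕ} (α : Fin r → E) (ρ : E) (hρ : ∀ i, 0 < (inner ℝ ρ (α i) : ℝ))
    (K : Set (E →L[ℝ] ℂ)) (hK : IsCompact K) :
    ∃ C > (0 : ℝ), ∃ M : ℕ,
      ∀ lam ∈ K, ∀ c : Fin r → ℕ, M ≤ ∑ i, c i →
        C * ((∑ i, c i : ℕ) : ℝ) ^ 2 ≤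
          ‖(1/2 : ℂ) *
              ((inner ℝ (∑ i, (c i : ℝ) • α i) (∑ i, (c i : ℝ) • α i) : ℝ) : ℂ)
            - ((inner ℝ ρ (∑ i, (c i : ℝ) • α i) : ℝ) : ℂ)
            - lam (∑ i, (c i : ℝ) • α i)‖ := by
  rcases Nat.eq_zero_or_pos r with hr | hr
  · subst hr
    refine ⟨1, one_pos, 1, fun lam _ c hc => ?_⟩
    simp at hc
  have hne : Nonempty (Fin r) := ⟨⟨0, hr⟩⟩
  obtain ⟨B0, hB0⟩ := isBounded_iff_forall_norm_le.mp hK.isBounded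
  set B : ℝ := max B0 0 with hBdef
  have hBnn : 0 ≤ B := le_max_right _ _
  have hB : ∀ lam ∈ K, ‖lam‖ ≤ B := fun lam hl => le_max_of_le_left (hB0 lam hl)
  set δ : ℝ := Finset.univ.inf' Finset.univ_nonempty (fun i => (inner ℝ ρ (α i) : ℝ)) with hδdef
  have hδ : 0 < δ := by
    rw [hδdef, Finset.lt_inf'_iff]
    exact fun i _ => hρ i
  have hδle : ∀ i, δ ≤ (inner ℝ ρ (α i) : ℝ) := fun i =>
    Finset.inf'_le _ (Finset.mem_univ i)
  set A : ℝ := Finset.univ.sup' Finset.univ_nonempty (fun i => ‖α i‖) with hAdef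
  have hAle : ∀ i, ‖α i‖ ≤ A := fun i => Finset.le_sup' (fun j => ‖α j‖) (Finset.mem_univ i)
  have hAnn : 0 ≤ A := le_trans (norm_nonneg _) (hAle ⟨0, hr⟩)
  have hρne : ρ ≠ 0 := by
    intro h
    have := hρ ⟨0, hr⟩
    rw [h] at this
    simp at this
  have hρpos : 0 < ‖ρ‖ := norm_pos_iff.mpr hρne
  set ε : ℝ := δ / ‖ρ‖ with hεdef
  have hε : 0 < ε := div_pos hδ hρpos
  refine ⟨ε ^ 2 / 4, by positivity, ⌈4 * (‖ρ‖ + B) * A / ε ^ 2⌉₊ + 1, ?_⟩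
  intro lam hlam c hc
  set nn : ℕ := ∑ i, c i with hnn
  set n : ℝ := (nn : ℝ) with hn
  have hn0 : 0 ≤ n := Nat.cast_nonneg _
  have hnM : 4 * (‖ρ‖ + B) * A ≤ ε ^ 2 * n := by
    have h1 : 4 * (‖ρ‖ + B) * A / ε ^ 2 ≤ n := by
      calc 4 * (‖ρ‖ + B) * A / ε ^ 2 ≤ (⌈4 * (‖ρ‖ + B) * A / ε ^ 2⌉₊ : ℝ) :=
            Nat.le_ceil _
        _ ≤ n := by
            rw [hn]
            exact_mod_cast le_trans (Nat.le_succ _) hc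
    calc 4 * (‖ρ‖ + B) * A = (4 * (‖ρ‖ + B) * A / ε ^ 2) * ε ^ 2 := by
          field_simp
      _ ≤ n * ε ^ 2 := by
          apply mul_le_mul_of_nonneg_right h1 (by positivity)
      _ = ε ^ 2 * n := by ring
  set μ : E := ∑ i, (c i : ℝ) • α i with hμ
  have hinnersum : (inner ℝ ρ μ : ℝ) = ∑ i, (c i : ℝ) * (inner ℝ ρ (α i) : ℝ) := by
    rw [hμ, inner_sum]
    exact Finset.sum_congr rfl fun i _ => real_inner_smul_right _ _ _
  have h1 : δ * n ≤ (inner ℝ ρ μ : ℝ) := by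
    rw [hinnersum, hn, hnn]
    push_cast
    rw [Finset.mul_sum]
    apply Finset.sum_le_sum
    intro i _
    rw [mul_comm]
    exact mul_le_mul_of_nonneg_left (hδle i) (Nat.cast_nonneg _)
  have h2 : ‖μ‖ ≤ A * n := by
    calc ‖μ‖ ≤ ∑ i, ‖(c i : ℝ) • α i‖ := norm_sum_le _ _
      _ ≤ ∑ i, (c i : ℝ) * A := by
          apply Finset.sum_le_sum
          intro i _
          rw [norm_smul, Real.norm_eq_abs, abs_of_nonneg (Nat.cast_nonneg _)]
          exact mul_le_mul_of_nonneg_left (hAle i) (Nat.cast_nonneg _)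
      _ = A * n := by rw [hn, hnn]; push_cast; rw [← Finset.sum_mul]; ring
  have h3 : ε * n ≤ ‖μ‖ := by
    have hcs : (inner ℝ ρ μ : ℝ) ≤ ‖ρ‖ * ‖μ‖ := real_inner_le_norm _ _
    rw [hεdef, div_mul_eq_mul_div, div_le_iff₀ hρpos]
    calc δ * n ≤ (inner ℝ ρ μ : ℝ) := h1
      _ ≤ ‖ρ‖ * ‖μ‖ := hcs
      _ = ‖μ‖ * ‖ρ‖ := by ring
  have h4 : ‖lam μ‖ ≤ B * (A * n) := by
    have := lam.le_opNorm μ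
    calc ‖lam μ‖ = ‖lam μ‖ := rfl
      _ ≤ ‖lam‖ * ‖μ‖ := this
      _ ≤ B * (A * n) := by
          apply mul_le_mul (hB lam hlam) h2 (norm_nonneg _) hBnn
  have hμsq : (inner ℝ μ μ : ℝ) = ‖μ‖ ^ 2 := real_inner_self_eq_norm_sq μ
  set z : ℂ := (1/2 : ℂ) * ((inner ℝ μ μ : ℝ) : ℂ) - ((inner ℝ ρ μ : ℝ) : ℂ) - lam μ with hz
  have hre : z.re = (1/2) * (inner ℝ μ μ : ℝ) - (inner ℝ ρ μ : ℝ) - (lam μ).re := by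
    simp [hz, Complex.sub_re, Complex.mul_re]
    rw [← Complex.ofReal_pow, Complex.ofReal_re]
  have hrele : z.re ≤ ‖z‖ := Complex.re_le_norm z
  have hlamre : (lam μ).re ≤ B * (A * n) :=
    le_trans (Complex.re_le_norm _) h4
  have hinup : (inner ℝ ρ μ : ℝ) ≤ ‖ρ‖ * (A * n) :=
    le_trans (real_inner_le_norm _ _)
      (mul_le_mul_of_nonneg_left h2 (norm_nonneg _))
  have hnormsq : (ε * n) ^ 2 ≤ ‖μ‖ ^ 2 := by
    apply pow_le_pow_left₀ (by positivity) h3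
  have key : ε ^ 2 / 4 * n ^ 2 ≤ z.re := by
    rw [hre, hμsq]
    nlinarith [hnormsq, hlamre, hinup, hnM, hn0, sq_nonneg n]
  exact le_trans key hrele
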